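/- Suppose t₁t₂ = 1 with 0 < t₁ < 1 < t₂ and C, D real with CD ≥ 0 and (C,D) ≠ (0,0). Then for all sufficiently large m and sufficiently small ε > 0, for every complex z with |z| = t₂ − ε, one has |z^{m+1}(t₁ − t₂)(C + Dz)| < |t₂^{m+1}(1 − z t₂)(Ct₁ + D) + t₁^{m+1}(z t₁ − 1)(Ct₂ + D)|. -/

import Mathlib

lemma pow_sub_pow_ge' (x y : ℝ) (hy : 0 ≤ y) (hxy : y ≤ x) :
    ∀ n : ℕ, ((n : ℝ) + 1) * y ^ n * (x - y) ≤ x ^ (n + 1) - y ^ (n + 1) := by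
  intro n
  induction n with
  | zero => simp
  | succ k ih =>
    have hx : 0 ≤ x := hy.trans hxy
    have h2 : 0 ≤ y ^ k := pow_nonneg hy k
    have h3 := mul_le_mul_of_nonneg_left ih hx
    have h4 : 0 ≤ (x - y) := sub_nonneg.2 hxy
    have h5 : 0 ≤ ((k:ℝ)+1) * (y ^ k * (x - y)) * (x - y) :=
      mul_nonneg (mul_nonneg (by positivity) (mul_nonneg h2 h4)) h4
    rw [pow_succ x (k+1), pow_succ y (k+1), pow_succ y k]
    rw [pow_succ y k] at h3
    push_cast
    nlinarith [h3, h5]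

set_option maxHeartbeats 1000000 in
lemma rouche_aux
    (t₁ t₂ C D : ℝ) (hprod : t₁ * t₂ = 1)
    (h1 : 0 < t₁) (h2 : t₁ < 1) (h3 : 1 < t₂)
    (hC : 0 ≤ C) (hD : 0 ≤ D) (hpos : 0 < C + D) :
    ∃ M : ℕ, ∃ ε₀ > (0 : ℝ), ∀ m ≥ M, ∀ ε : ℝ, 0 < ε → ε < ε₀ →
      ∀ z : ℂ, ‖z‖ = t₂ - ε →
        ‖z ^ (m + 1) * ((t₁ : ℂ) - t₂) * ((C : ℂ) + D * z)‖
          < ‖(t₂ : ℂ) ^ (m + 1) * (1 - z * t₂) * ((C : ℂ) * t₁ + D)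
              + (t₁ : ℂ) ^ (m + 1) * (z * t₁ - 1) * ((C : ℂ) * t₂ + D)‖ := by
  have ht₂ : 0 < t₂ := lt_trans one_pos h3
  set K : ℝ := C * t₁ + D with hKdef
  set E : ℝ := C * t₂ + D with hEdef
  clear_value K E
  have hK : 0 < K := by rw [hKdef]; nlinarith
  have hE : 0 < E := by rw [hEdef]; nlinarith
  have ht21 : 0 < t₂ ^ 2 - 1 := by nlinarith
  obtain ⟨M₁, hM₁⟩ := exists_nat_gt (2 * t₂ ^ 2 / (t₂ ^ 2 - 1))
  obtain ⟨M₂, hM₂⟩ := exists_pow_lt_of_lt_one (show (0:ℝ) < K / (2 * E) by positivity)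
    (show t₁ / t₂ < 1 by rw [div_lt_one ht₂]; linarith)
  refine ⟨max M₁ M₂, min ((t₂ ^ 2 - 1) / (2 * t₂)) t₁, lt_min (by positivity) h1, ?_⟩
  intro m hm ε hε hεlt z hz
  have hε1 : ε < (t₂ ^ 2 - 1) / (2 * t₂) := lt_of_lt_of_le hεlt (min_le_left _ _)
  have hε2 : ε < t₁ := lt_of_lt_of_le hεlt (min_le_right _ _)
  set ρ : ℝ := t₂ - ε with hρdef
  clear_value ρ
  have hρpos : 0 < ρ := by simp only [hρdef]; linarith
  have hρt₂ : ρ < t₂ := by simp only [hρdef]; linarith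
  have hεt₂ : ε * t₂ < (t₂ ^ 2 - 1) / 2 := by
    rw [lt_div_iff₀ (by linarith : (0:ℝ) < 2 * t₂)] at hε1
    nlinarith
  have hρt₁ : ρ * t₁ < 1 := by nlinarith
  -- power abbreviations
  have hT2 : (0:ℝ) < t₂ ^ (m + 1) := pow_pos ht₂ _
  have hT1 : (0:ℝ) < t₁ ^ (m + 1) := pow_pos h1 _
  have hR : (0:ℝ) < ρ ^ (m + 1) := pow_pos hρpos _
  have hRle : ρ ^ (m + 1) ≤ t₂ ^ (m + 1) := pow_le_pow_left₀ hρpos.le hρt₂.le _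
  -- key1 : ρ^{m+1}(t₂²-1) < t₂^{m+1}(ρ t₂ - 1)
  have key1 : ρ ^ (m + 1) * (t₂ ^ 2 - 1) < t₂ ^ (m + 1) * (ρ * t₂ - 1) := by
    suffices hgap : ε * t₂ * t₂ ^ (m+1) < (t₂ ^ 2 - 1) * (t₂ ^ (m+1) - ρ ^ (m+1)) by
      have hrw : ρ * t₂ - 1 = (t₂ ^ 2 - 1) - ε * t₂ := by rw [hρdef]; ring
      rw [hrw, mul_sub]
      linarith [hgap]
    rcases le_or_gt (ρ ^ (m + 1)) (t₂ ^ (m + 1) / 2) with hcase | hcase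
    · have p1 : (t₂ ^ 2 - 1) * (t₂ ^ (m+1) / 2) ≤ (t₂ ^ 2 - 1) * (t₂ ^ (m+1) - ρ ^ (m+1)) :=
        mul_le_mul_of_nonneg_left (by linarith) ht21.le
      have p2 : (0:ℝ) < t₂ ^ (m+1) * ((t₂ ^ 2 - 1) / 2 - ε * t₂) :=
        mul_pos hT2 (by linarith)
      linarith [p1, p2]
    · -- large-ρ case: use derivative bound and m large
      have hmm : (2 * t₂ ^ 2 / (t₂ ^ 2 - 1)) < (m : ℝ) := by
        have : (M₁ : ℝ) ≤ (m : ℝ) := by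
          exact_mod_cast le_trans (le_max_left M₁ M₂) hm
        linarith
      have hm2 : 2 * t₂ ^ 2 < (m : ℝ) * (t₂ ^ 2 - 1) := by
        rw [div_lt_iff₀ ht21] at hmm; linarith
      have hsub := pow_sub_pow_ge' t₂ ρ hρpos.le hρt₂.le m
      have hρm : t₂ ^ m / 2 < ρ ^ m := by
        rw [pow_succ ρ m, pow_succ t₂ m] at hcase
        have h6 : ρ ^ m * ρ ≤ ρ ^ m * t₂ :=
          mul_le_mul_of_nonneg_left hρt₂.le (pow_nonneg hρpos.le m)
        nlinarith [h6, ht₂]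
      have hεm : t₂ - ρ = ε := by rw [hρdef]; ring
      rw [hεm] at hsub
      have hpm : (0:ℝ) < t₂ ^ m := pow_pos ht₂ m
      have hmpos : (0:ℝ) < (m:ℝ) + 1 := by positivity
      have s1 : (t₂^2 - 1) * (((m:ℝ)+1) * ρ^m * ε) ≤ (t₂^2-1) * (t₂^(m+1) - ρ^(m+1)) :=
        mul_le_mul_of_nonneg_left hsub ht21.le
      have s2 : ((m:ℝ)+1) * (t₂^m/2) * ε < ((m:ℝ)+1) * ρ^m * ε :=
        mul_lt_mul_of_pos_right (mul_lt_mul_of_pos_left hρm hmpos) hε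
      have s2' := mul_lt_mul_of_pos_left s2 ht21
      have s3 : ε * t₂ * t₂^(m+1) ≤ (t₂^2-1) * (((m:ℝ)+1) * (t₂^m/2) * ε) := by
        rw [pow_succ t₂ m]
        linarith [mul_nonneg (mul_nonneg hε.le hpm.le)
          (show (0:ℝ) ≤ ((m:ℝ)+1) * (t₂^2 - 1) - 2 * t₂^2 by linarith [hm2])]
      linarith [s1, s2', s3]
  -- key2 : 2 t₁^{m+1} E < t₂^{m+1} K
  have key2 : 2 * (t₁ ^ (m + 1) * E) < t₂ ^ (m + 1) * K := by
    have hle : (t₁ / t₂) ^ (m + 1) ≤ (t₁ / t₂) ^ M₂ := by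
      apply pow_le_pow_of_le_one (by positivity) (by rw [div_le_one ht₂]; linarith)
      exact le_trans (le_trans (le_max_right M₁ M₂) hm) (Nat.le_succ m)
    have h7 : (t₁ / t₂) ^ (m + 1) < K / (2 * E) := lt_of_le_of_lt hle hM₂
    rw [div_pow, div_lt_div_iff₀ (pow_pos ht₂ _) (by positivity)] at h7
    linarith
  -- endpoint scalar inequalities
  have ht₁₂ : t₁ < t₂ := lt_trans h2 h3
  have hεt₂1 : ε * t₂ < 1 := by nlinarith [mul_lt_mul_of_pos_right hε2 ht₂]
  have w1 : (t₂^2 - 1) * K - (t₂ - t₁) * (C + D*ρ) = D * (t₂ - t₁) * (t₂ - ρ) := by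
    rw [hKdef]; linear_combination (C*t₂ + D) * hprod
  have w1' : (t₂ - t₁) * (C + D*ρ) ≤ (t₂^2 - 1) * K := by
    have := mul_nonneg (mul_nonneg hD (by linarith : (0:ℝ) ≤ t₂ - t₁)) (by linarith : (0:ℝ) ≤ t₂ - ρ)
    linarith [w1]
  have w2 : 0 ≤ t₁^(m+1) * E * (1 - ρ*t₁) :=
    mul_nonneg (mul_nonneg hT1.le hE.le) (by linarith)
  have w3 := mul_lt_mul_of_pos_right key1 hK
  have w4 := mul_le_mul_of_nonneg_left w1' hR.le
  have hEp : ρ^(m+1) * (t₂ - t₁) * (C + D*ρ)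
      < t₂^(m+1) * K * (ρ*t₂ - 1) + t₁^(m+1) * E * (1 - ρ*t₁) := by
    linarith [w2, w3, w4]
  have hEm : ρ^(m+1) * (t₂ - t₁) * (C + D*ρ)
      < t₂^(m+1) * K * (1 + ρ*t₂) - t₁^(m+1) * E * (1 + ρ*t₁) := by
    have v1 := mul_le_mul_of_nonneg_right hRle (mul_pos ht21 hK).le
    have v2 : t₁^(m+1) * E * (1 + ρ*t₁) ≤ 2 * (t₁^(m+1) * E) := by
      nlinarith [mul_nonneg (mul_pos hT1 hE).le (by linarith : (0:ℝ) ≤ 1 - ρ*t₁)]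
    have u1 : t₂^(m+1) * K * (1 + ρ*t₂)
        = t₂^(m+1) * K * (t₂^2 - 1) + t₂^(m+1) * K * (2 - ε*t₂) := by
      rw [hρdef]; ring
    have u3 : t₂^(m+1) * K ≤ t₂^(m+1) * K * (2 - ε*t₂) := by
      nlinarith [mul_nonneg (mul_pos hT2 hK).le (by linarith : (0:ℝ) ≤ 1 - ε*t₂)]
    linarith [w4, v1, v2, u1, u3, key2]
  have hq : 0 ≤ ρ^(m+1) * (t₂ - t₁) * (C + D*ρ) := by
    have hcd : 0 ≤ C + D*ρ := by nlinarith [mul_nonneg hD hρpos.le]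
    exact mul_nonneg (mul_nonneg hR.le (by linarith)) hcd
  have hEp2 : (ρ^(m+1) * (t₂ - t₁) * (C + D*ρ))^2
      < (t₂^(m+1) * K * (ρ*t₂ - 1) + t₁^(m+1) * E * (1 - ρ*t₁))^2 := by
    have := mul_self_lt_mul_self hq hEp
    linarith [this]
  have hEm2 : (ρ^(m+1))^2 * (t₂ - t₁)^2 * (C - D*ρ)^2
      < (t₂^(m+1) * K * (1 + ρ*t₂) - t₁^(m+1) * E * (1 + ρ*t₁))^2 := by
    have g1 := mul_self_lt_mul_self hq hEm
    have g0 : (C - D*ρ)^2 ≤ (C + D*ρ)^2 := by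
      nlinarith [mul_nonneg (mul_nonneg hC hD) hρpos.le]
    have g2 : (ρ^(m+1))^2 * (t₂ - t₁)^2 * (C - D*ρ)^2
        ≤ (ρ^(m+1))^2 * (t₂ - t₁)^2 * (C + D*ρ)^2 :=
      mul_le_mul_of_nonneg_left g0 (by positivity)
    linarith [g1, g2]
  -- abbreviate
  set a : ℝ := t₂^(m+1) * K with hadef
  set b : ℝ := t₁^(m+1) * E with hbdef
  -- reduce to normSq
  have habs : ∀ w v : ℂ, Complex.normSq w < Complex.normSq v → ‖w‖ < ‖v‖ := by
    intro w v h
    rw [Complex.norm_def, Complex.norm_def]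
    exact Real.sqrt_lt_sqrt (Complex.normSq_nonneg w) h
  apply habs
  have hzn : Complex.normSq z = ρ^2 := by rw [← Complex.sq_norm, hz]
  have hzsq : z.re^2 + z.im^2 = ρ^2 := by
    rw [Complex.normSq_apply] at hzn; linear_combination hzn
  have hxb : -ρ ≤ z.re ∧ z.re ≤ ρ := by
    have h := Complex.abs_re_le_norm z
    rw [hz] at h
    exact abs_le.1 h
  have hG : Complex.normSq (z ^ (m + 1) * ((t₁ : ℂ) - t₂) * ((C : ℂ) + D * z))
      = (ρ^(m+1))^2 * (t₂-t₁)^2 * ((C + D*z.re)^2 + (D*z.im)^2) := by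
    rw [map_mul, map_mul, map_pow, hzn]
    have e1 : Complex.normSq ((t₁:ℂ) - t₂) = (t₁ - t₂)^2 := by
      rw [← Complex.ofReal_sub, Complex.normSq_ofReal]; ring
    have e2 : Complex.normSq ((C:ℂ) + D*z) = (C + D*z.re)^2 + (D*z.im)^2 := by
      simp [Complex.normSq_apply, Complex.add_re, Complex.add_im, Complex.mul_re,
        Complex.mul_im, Complex.ofReal_re, Complex.ofReal_im]
      ring
    rw [e1, e2, pow_right_comm]
    ring
  have hFeq : (t₂ : ℂ) ^ (m + 1) * (1 - z * t₂) * ((C : ℂ) * t₁ + D)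
              + (t₁ : ℂ) ^ (m + 1) * (z * t₁ - 1) * ((C : ℂ) * t₂ + D)
      = ((a : ℝ) : ℂ) * (1 - z * ((t₂:ℝ):ℂ)) + ((b : ℝ) : ℂ) * (z * ((t₁:ℝ):ℂ) - 1) := by
    rw [hadef, hbdef, hKdef, hEdef]; push_cast; ring
  have hF : Complex.normSq ((t₂ : ℂ) ^ (m + 1) * (1 - z * t₂) * ((C : ℂ) * t₁ + D)
              + (t₁ : ℂ) ^ (m + 1) * (z * t₁ - 1) * ((C : ℂ) * t₂ + D))
      = (a*(1 - z.re*t₂) + b*(z.re*t₁ - 1))^2 + (z.im*(b*t₁ - a*t₂))^2 := by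
    rw [hFeq]
    simp [Complex.normSq_apply, Complex.add_re, Complex.add_im, Complex.mul_re,
      Complex.mul_im, Complex.sub_re, Complex.sub_im, Complex.one_re, Complex.one_im,
      Complex.ofReal_re, Complex.ofReal_im]
    ring
  rw [hG, hF]
  have hy2 : z.im^2 = ρ^2 - z.re^2 := by linarith [hzsq]
  have hid : 2*ρ*(((a*(1 - z.re*t₂) + b*(z.re*t₁ - 1))^2 + (z.im*(b*t₁ - a*t₂))^2)
        - (ρ^(m+1))^2 * (t₂-t₁)^2 * ((C + D*z.re)^2 + (D*z.im)^2))
      = (ρ + z.re) * ((a*(ρ*t₂ - 1) + b*(1 - ρ*t₁))^2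
            - (ρ^(m+1) * (t₂ - t₁) * (C + D*ρ))^2)
        + (ρ - z.re) * ((a*(1 + ρ*t₂) - b*(1 + ρ*t₁))^2
            - (ρ^(m+1))^2 * (t₂ - t₁)^2 * (C - D*ρ)^2) := by
    linear_combination (2*ρ*((b*t₁ - a*t₂)^2 - (ρ^(m+1))^2*(t₂-t₁)^2*D^2)) * hy2
  have hfin : 0 < (ρ + z.re) * ((a*(ρ*t₂ - 1) + b*(1 - ρ*t₁))^2
            - (ρ^(m+1) * (t₂ - t₁) * (C + D*ρ))^2)
        + (ρ - z.re) * ((a*(1 + ρ*t₂) - b*(1 + ρ*t₁))^2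
            - (ρ^(m+1))^2 * (t₂ - t₁)^2 * (C - D*ρ)^2) := by
    have d1 : 0 < (a*(ρ*t₂ - 1) + b*(1 - ρ*t₁))^2
        - (ρ^(m+1) * (t₂ - t₁) * (C + D*ρ))^2 := by linarith [hEp2]
    have d2 : 0 < (a*(1 + ρ*t₂) - b*(1 + ρ*t₁))^2
        - (ρ^(m+1))^2 * (t₂ - t₁)^2 * (C - D*ρ)^2 := by linarith [hEm2]
    rcases le_total 0 z.re with hs | hs
    · have p1 := mul_pos (show (0:ℝ) < ρ + z.re by linarith) d1
      have p2 := mul_nonneg (show (0:ℝ) ≤ ρ - z.re by linarith [hxb.2]) d2.le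
      linarith
    · have p1 := mul_nonneg (show (0:ℝ) ≤ ρ + z.re by linarith [hxb.1]) d1.le
      have p2 := mul_pos (show (0:ℝ) < ρ - z.re by linarith) d2
      linarith
  rw [← hid] at hfin
  rcases mul_pos_iff.1 hfin with ⟨hu, hv⟩ | ⟨hu, hv⟩
  · linarith
  · linarith

theorem rouche_ineq_ac_pos_CD_nonneg
    (t₁ t₂ C D : ℝ) (hprod : t₁ * t₂ = 1)
    (h1 : 0 < t₁) (h2 : t₁ < 1) (h3 : 1 < t₂)
    (hCD : C * D ≥ 0) (hCD0 : (C, D) ≠ (0, 0)) :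
    ∃ M : ℕ, ∃ ε₀ > (0 : ℝ), ∀ m ≥ M, ∀ ε : ℝ, 0 < ε → ε < ε₀ →
      ∀ z : ℂ, ‖z‖ = t₂ - ε →
        ‖z ^ (m + 1) * ((t₁ : ℂ) - t₂) * ((C : ℂ) + D * z)‖
          < ‖(t₂ : ℂ) ^ (m + 1) * (1 - z * t₂) * ((C : ℂ) * t₁ + D)
              + (t₁ : ℂ) ^ (m + 1) * (z * t₁ - 1) * ((C : ℂ) * t₂ + D)‖ := by
  have hne : C ≠ 0 ∨ D ≠ 0 := by
    by_contra h
    push_neg at h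
    exact hCD0 (by simp [h.1, h.2, Prod.ext_iff])
  have hcases : (0 ≤ C ∧ 0 ≤ D) ∨ (C ≤ 0 ∧ D ≤ 0) := by
    rcases le_total 0 C with hC | hC <;> rcases le_total 0 D with hD | hD
    · exact Or.inl ⟨hC, hD⟩
    · have h0 : C * D = 0 := le_antisymm (mul_nonpos_of_nonneg_of_nonpos hC hD) hCD
      rcases mul_eq_zero.1 h0 with h | h
      · exact Or.inr ⟨le_of_eq h, hD⟩
      · exact Or.inl ⟨hC, ge_of_eq h⟩
    · have h0 : C * D = 0 := le_antisymm (mul_nonpos_of_nonpos_of_nonneg hC hD) hCD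
      rcases mul_eq_zero.1 h0 with h | h
      · exact Or.inl ⟨ge_of_eq h, hD⟩
      · exact Or.inr ⟨hC, le_of_eq h⟩
    · exact Or.inr ⟨hC, hD⟩
  rcases hcases with ⟨hC, hD⟩ | ⟨hC, hD⟩
  · have hpos : 0 < C + D := by
      rcases hne with h | h
      · have := lt_of_le_of_ne hC (Ne.symm h); linarith
      · have := lt_of_le_of_ne hD (Ne.symm h); linarith
    exact rouche_aux t₁ t₂ C D hprod h1 h2 h3 hC hD hpos
  · have hpos : 0 < (-C) + (-D) := by
      rcases hne with h | h
      · have : C < 0 := lt_of_le_of_ne hC h; linarith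
      · have : D < 0 := lt_of_le_of_ne hD h; linarith
    obtain ⟨M, ε₀, hε₀, H⟩ := rouche_aux t₁ t₂ (-C) (-D) hprod h1 h2 h3
      (by linarith) (by linarith) hpos
    refine ⟨M, ε₀, hε₀, ?_⟩
    intro m hm ε hε hεlt z hz
    have h := H m hm ε hε hεlt z hz
    have e1 : z ^ (m + 1) * ((t₁ : ℂ) - t₂) * ((C : ℂ) + D * z)
        = -(z ^ (m + 1) * ((t₁ : ℂ) - t₂) * ((((-C) : ℝ) : ℂ) + (((-D) : ℝ) : ℂ) * z)) := by
      push_cast; ring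
    have e2 : (t₂ : ℂ) ^ (m + 1) * (1 - z * t₂) * ((C : ℂ) * t₁ + D)
              + (t₁ : ℂ) ^ (m + 1) * (z * t₁ - 1) * ((C : ℂ) * t₂ + D)
        = -((t₂ : ℂ) ^ (m + 1) * (1 - z * t₂) * ((((-C) : ℝ) : ℂ) * t₁ + (((-D) : ℝ) : ℂ))
              + (t₁ : ℂ) ^ (m + 1) * (z * t₁ - 1) * ((((-C) : ℝ) : ℂ) * t₂ + (((-D) : ℝ) : ℂ))) := by
      push_cast; ring
    rw [e1, e2, norm_neg, norm_neg]
    exact h
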